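/- arXiv:1102.4132 — 3 statements merged into one kernel-verified Lean document; each statement's English description precedes it below -/
import Mathlib

section
/- Let u̅ and u̲ be nonnegative functions on [−p/α,∞) that are, respectively, a viscosity super-solution and a viscosity sub-solution of the HJB equation on (−p/α,∞). Assume each of u̅, u̲ is continuous on [−p/α,∞), locally Lipschitz on (−p/α,∞), satisfies u̅(−p/α) = u̲(−p/α) = 0, and satisfies a linear growth bound (there exist constants c₁, c₂ with u(x) ≤ c₁·x + c₂ for all x ≥ −p/α). Then u̲(x) ≤ u̅(x) for all x ≥ −p/α. -/
set_option maxHeartbeats 2000000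


open MeasureTheory Set Filter

noncomputable section

/-- Drift coefficient: c(x) = p + r x for x ≥ 0, c(x) = p + α x for x < 0. -/
def drift (p r a x : ℝ) : ℝ := if 0 ≤ x then p + r * x else p + a * x

/-- I_v(x) = ∫_{(0, x+p/α]} v(x−u) dμ(u). -/
def Iop (p a : ℝ) (mu : Measure ℝ) (v : ℝ → ℝ) (x : ℝ) : ℝ :=
  ∫ u in Set.Ioc (0 : ℝ) (x + p / a), v (x - u) ∂mu

/-- L_{v,φ}(x) = c(x)·φ′(x) − (λ+δ)·v(x) + λ·I_v(x). -/
def Lphi (p lam d r a : ℝ) (mu : Measure ℝ) (v phi : ℝ → ℝ) (x : ℝ) : ℝ :=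
  drift p r a x * deriv phi x - (lam + d) * v x + lam * Iop p a mu v x

/-- G_v(x) = c(x) − (λ+δ)·v(x) + λ·I_v(x). -/
def Gop (p lam d r a : ℝ) (mu : Measure ℝ) (v : ℝ → ℝ) (x : ℝ) : ℝ :=
  drift p r a x - (lam + d) * v x + lam * Iop p a mu v x

/-- Viscosity sub-solution of the HJB equation on J ⊆ (−p/α,∞). -/
def IsViscSubsol (p lam d r a : ℝ) (mu : Measure ℝ) (u : ℝ → ℝ) (J : Set ℝ) : Prop :=
  ∀ x ∈ J, ∀ phi : ℝ → ℝ, ContDiff ℝ 1 phi → phi x = u x →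
    (∀ y ∈ Set.Ici (-(p / a)), u y - phi y ≤ u x - phi x) →
    0 ≤ max (1 - deriv phi x) (Lphi p lam d r a mu u phi x)

/-- Viscosity super-solution of the HJB equation on J ⊆ (−p/α,∞). -/
def IsViscSupersol (p lam d r a : ℝ) (mu : Measure ℝ) (u : ℝ → ℝ) (J : Set ℝ) : Prop :=
  ∀ x ∈ J, ∀ phi : ℝ → ℝ, ContDiff ℝ 1 phi → phi x = u x →
    (∀ y ∈ Set.Ici (-(p / a)), u x - phi x ≤ u y - phi y) →
    max (1 - deriv phi x) (Lphi p lam d r a mu u phi x) ≤ 0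

/-- Viscosity solution: both sub- and super-solution. -/
def IsViscSol (p lam d r a : ℝ) (mu : Measure ℝ) (u : ℝ → ℝ) (J : Set ℝ) : Prop :=
  IsViscSubsol p lam d r a mu u J ∧ IsViscSupersol p lam d r a mu u J

/-- Locally Lipschitz on a set. -/
def LocLipOn (s : Set ℝ) (u : ℝ → ℝ) : Prop :=
  ∀ x ∈ s, ∃ K : NNReal, ∃ eps : ℝ, 0 < eps ∧ LipschitzOnWith K u (s ∩ Metric.ball x eps)

/-- Linear growth bound on [−p/α,∞). -/
def LinGrowth (p a : ℝ) (u : ℝ → ℝ) : Prop :=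
  ∃ c₁ c₂ : ℝ, ∀ x : ℝ, -(p / a) ≤ x → u x ≤ c₁ * x + c₂

/-- Standard value-function candidate. -/
structure IsCandidate (p lam d r a : ℝ) (mu : Measure ℝ) (V : ℝ → ℝ) : Prop where
  cont : ContinuousOn V (Set.Ici (-(p / a)))
  nonneg : ∀ x ∈ Set.Ici (-(p / a)), 0 ≤ V x
  mono : MonotoneOn V (Set.Ici (-(p / a)))
  boundary : V (-(p / a)) = 0
  slope : ∀ x y : ℝ, -(p / a) ≤ x → x ≤ y → y - x ≤ V y - V x
  growth : ∀ x : ℝ, 0 ≤ x → V x ≤ (d * x + p) / (d - r) + p / a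
  locLip : LocLipOn (Set.Ioi (-(p / a))) V
  visc : IsViscSol p lam d r a mu V (Set.Ioi (-(p / a)))
  derivLim : ∀ x ∈ Set.Ioi (-(p / a)), ∀ (h : ℕ → ℝ) (dd : ℝ),
      ((∀ n, 0 < h n) ∨ (∀ n, h n < 0)) →
      Filter.Tendsto h Filter.atTop (nhds 0) →
      Filter.Tendsto (fun n => (V (x + h n) - V x) / h n) Filter.atTop (nhds dd) →
      1 ≤ dd ∧ dd * drift p r a x - (lam + d) * V x + lam * Iop p a mu V x ≤ 0

/-- The set A = {x ∈ [−p/α,∞) : G_V(x) = 0}. -/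
def setA (p lam d r a : ℝ) (mu : Measure ℝ) (V : ℝ → ℝ) : Set ℝ :=
  {x | x ∈ Set.Ici (-(p / a)) ∧ Gop p lam d r a mu V x = 0}

/-- The set B = {x ∈ [−p/α,∞) : V′(x) exists, V′(x) = 1 and G_V(x) < 0}. -/
def setB (p lam d r a : ℝ) (mu : Measure ℝ) (V : ℝ → ℝ) : Set ℝ :=
  {x | x ∈ Set.Ici (-(p / a)) ∧ DifferentiableAt ℝ V x ∧ deriv V x = 1 ∧
      Gop p lam d r a mu V x < 0}

/-- The set C = [−p/α,∞) \ (A ∪ B). -/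
def setC (p lam d r a : ℝ) (mu : Measure ℝ) (V : ℝ → ℝ) : Set ℝ :=
  Set.Ici (-(p / a)) \ (setA p lam d r a mu V ∪ setB p lam d r a mu V)

lemma drift_sub_le {p r a : ℝ} (hr : 0 < r) (hra : r < a) (x y : ℝ) :
    drift p r a x - drift p r a y ≤ a * |x - y| := by
  rcases abs_cases (x - y) with ⟨h1, h2⟩ | ⟨h1, h2⟩ <;>
  · unfold drift
    split_ifs with hx hy hy <;> rw [h1] <;>
      [nlinarith; nlinarith [not_le.mp hy]; nlinarith [not_le.mp hx]; nlinarith [not_le.mp hx, not_le.mp hy]]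

lemma drift_nonneg {p r a : ℝ} (hp : 0 < p) (hr : 0 < r) (ha : 0 < a) {x : ℝ}
    (hx : -(p / a) ≤ x) : 0 ≤ drift p r a x := by
  unfold drift
  have h : p / a * a = p := div_mul_cancel₀ p ha.ne'
  split <;> nlinarith [mul_le_mul_of_nonneg_right hx ha.le]

lemma drift_le {p r a : ℝ} (hr : 0 < r) (hra : r < a) {x : ℝ} :
    -(p / a) ≤ x → drift p r a x ≤ p + r * x := by
  intro _
  unfold drift
  split
  · exact le_refl _
  · nlinarith [not_le.mp (by assumption : ¬ 0 ≤ x)]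

def gB (p r x : ℝ) : ℝ := (p + r * x) ^ 2 + 1

def gfun (p r e x : ℝ) : ℝ := gB p r x ^ (e / 2)

def gder (p r e x : ℝ) : ℝ := e * r * (p + r * x) * gB p r x ^ (e / 2 - 1)

lemma gB_pos {p r x : ℝ} : 0 < gB p r x := by unfold gB; positivity

lemma hasDerivAt_gB (p r x : ℝ) : HasDerivAt (gB p r) (2 * (p + r * x) * r) x := by
  have h : HasDerivAt (fun x : ℝ => p + r * x) r x := by
    simpa using ((hasDerivAt_id x).const_mul r).const_add p
  show HasDerivAt (fun x => (p + r * x) ^ 2 + 1) _ x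
  simpa using (h.pow 2).add_const 1

lemma hasDerivAt_gfun (p r e x : ℝ) : HasDerivAt (gfun p r e) (gder p r e x) x := by
  have h := (hasDerivAt_gB p r x).rpow_const (p := e / 2) (Or.inl gB_pos.ne')
  have heq : 2 * (p + r * x) * r * (e / 2) * gB p r x ^ (e / 2 - 1) = gder p r e x := by
    unfold gder; ring
  rw [← heq]
  show HasDerivAt (fun y => gB p r y ^ (e / 2)) _ x
  convert h using 1

lemma contDiff_gfun (p r e : ℝ) : ContDiff ℝ 1 (gfun p r e) := by
  rw [contDiff_iff_contDiffAt]
  intro x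
  have hB : ContDiffAt ℝ 1 (gB p r) x := by
    apply ContDiffAt.add _ contDiffAt_const
    exact (contDiffAt_const.add (contDiffAt_const.mul contDiffAt_id)).pow 2
  exact hB.rpow_const_of_ne gB_pos.ne'

lemma gfun_pos {p r e x : ℝ} : 0 < gfun p r e x := Real.rpow_pos_of_pos gB_pos _

lemma gfun_mono {p r e : ℝ} (hr : 0 < r) (he : 0 ≤ e) {x y : ℝ}
    (hx : 0 ≤ p + r * x) (hxy : x ≤ y) : gfun p r e x ≤ gfun p r e y := by
  have hB : gB p r x ≤ gB p r y := by
    unfold gB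
    have : p + r * x ≤ p + r * y := by nlinarith
    nlinarith
  exact Real.rpow_le_rpow gB_pos.le hB (by positivity)

lemma gder_pos {p r e x : ℝ} (hr : 0 < r) (he : 0 < e) (hx : 0 < p + r * x) :
    0 < gder p r e x := by
  unfold gder
  have := Real.rpow_pos_of_pos (gB_pos (p := p) (r := r) (x := x)) (e / 2 - 1)
  positivity

lemma gfun_lb {p r e x : ℝ} (he : 0 ≤ e) (hx : 0 ≤ p + r * x) :
    (p + r * x) ^ (e : ℝ) ≤ gfun p r e x := by
  have h1 : (p + r * x) ^ (e : ℝ) = ((p + r * x) ^ 2) ^ (e / 2 : ℝ) := by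
    rw [← Real.rpow_natCast (p + r * x) 2, ← Real.rpow_mul hx,
      show ((2 : ℕ) : ℝ) * (e / 2) = e by push_cast; ring]
  rw [h1]
  exact Real.rpow_le_rpow (by positivity) (by unfold gB; linarith) (by positivity)

lemma drift_gder_le {p r a d e x : ℝ} (hp : 0 < p) (hr : 0 < r) (hra : r < a)
    (hd : 0 < d) (hede : e = d / r) (hx : -(p / a) ≤ x) :
    drift p r a x * gder p r e x ≤ d * gfun p r e x := by
  have ha : 0 < a := hr.trans hra
  have ht : 0 < p + r * x := by
    have h : p / a * a = p := div_mul_cancel₀ p ha.ne'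
    nlinarith [mul_le_mul_of_nonneg_right hx hr.le]
  have h0 : 0 ≤ drift p r a x := drift_nonneg hp hr ha hx
  have h1 : drift p r a x ≤ p + r * x := drift_le hr hra hx
  have her : e * r = d := by rw [hede]; field_simp
  have hBp := gB_pos (p := p) (r := r) (x := x)
  have hpow : 0 < gB p r x ^ (e / 2 - 1) := Real.rpow_pos_of_pos hBp _
  have key : (p + r * x) ^ 2 * gB p r x ^ (e / 2 - 1) ≤ gfun p r e x := by
    have : gfun p r e x = gB p r x ^ (e / 2 - 1) * gB p r x := by
      rw [gfun, ← Real.rpow_add_one hBp.ne']; ring_nf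
    rw [this]
    have hB2 : (p + r * x) ^ 2 ≤ gB p r x := by unfold gB; linarith
    nlinarith
  calc drift p r a x * gder p r e x
      = e * r * (drift p r a x * (p + r * x) * gB p r x ^ (e / 2 - 1)) := by
        unfold gder; ring
    _ ≤ e * r * ((p + r * x) ^ 2 * gB p r x ^ (e / 2 - 1)) := by
        apply mul_le_mul_of_nonneg_left _ (by rw [her]; exact hd.le)
        have : drift p r a x * (p + r * x) ≤ (p + r * x) ^ 2 := by nlinarith
        nlinarith
    _ ≤ e * r * gfun p r e x := by
        apply mul_le_mul_of_nonneg_left key (by rw [her]; exact hd.le)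
    _ = d * gfun p r e x := by rw [her]

lemma integrableOn_shift {c0 : ℝ} {v : ℝ → ℝ} (hv : ContinuousOn v (Set.Ici c0))
    (mu : Measure ℝ) [IsFiniteMeasure mu] {x : ℝ} (hx : c0 ≤ x) {s : Set ℝ}
    (hs : s ⊆ Set.Icc 0 (x - c0)) :
    IntegrableOn (fun u => v (x - u)) s mu := by
  apply IntegrableOn.mono_set _ hs
  apply ContinuousOn.integrableOn_compact isCompact_Icc
  apply hv.comp (Continuous.continuousOn (by continuity))
  intro u hu
  simp only [Set.mem_Icc] at hu
  simp only [Set.mem_Ici]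
  linarith [hu.1, hu.2]

lemma sq_lt_imp {x t : ℝ} (hx : 0 ≤ x) (ht : 0 < t) (h : x ^ 2 < t ^ 2) : x < t := by
  nlinarith

lemma sq_le_imp {x t : ℝ} (hx : 0 ≤ x) (ht : 0 ≤ t) (h : x ^ 2 ≤ t ^ 2) : x ≤ t := by
  nlinarith

lemma exists_max_on_prod {c0 : ℝ} (F : ℝ → ℝ → ℝ)
    (hF : ContinuousOn (fun z : ℝ × ℝ => F z.1 z.2) (Set.Ici c0 ×ˢ Set.Ici c0))
    (x0 R R2 : ℝ) (hx0 : c0 ≤ x0) (hx0R : x0 ≤ R) (hx0R2 : x0 ≤ R2)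
    (hout : ∀ x y, c0 ≤ x → c0 ≤ y → (R < x ∨ R2 < y) → F x y < F x0 x0) :
    ∃ xm ym, c0 ≤ xm ∧ c0 ≤ ym ∧ ∀ x y, c0 ≤ x → c0 ≤ y → F x y ≤ F xm ym := by
  have hK : IsCompact (Set.Icc c0 R ×ˢ Set.Icc c0 R2) := isCompact_Icc.prod isCompact_Icc
  have hne : ((x0, x0) : ℝ × ℝ) ∈ Set.Icc c0 R ×ˢ Set.Icc c0 R2 := by
    constructor <;> exact ⟨hx0, by assumption⟩
  have hsub : Set.Icc c0 R ×ˢ Set.Icc c0 R2 ⊆ Set.Ici c0 ×ˢ Set.Ici c0 := by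
    intro z hz; exact ⟨hz.1.1, hz.2.1⟩
  obtain ⟨z, hzK, hz⟩ := hK.exists_isMaxOn ⟨_, hne⟩ (hF.mono hsub)
  refine ⟨z.1, z.2, hzK.1.1, hzK.2.1, fun x y hx hy => ?_⟩
  by_cases hmem : ((x, y) : ℝ × ℝ) ∈ Set.Icc c0 R ×ˢ Set.Icc c0 R2
  · exact hz hmem
  · have hor : R < x ∨ R2 < y := by
      by_contra hcc
      push_neg at hcc
      exact hmem ⟨⟨hx, hcc.1⟩, ⟨hy, hcc.2⟩⟩
    exact le_trans (hout x y hx hy hor).le (hz hne)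

theorem stmt0
    (p lam d r a : ℝ) (hp : 0 < p) (hlam : 0 < lam) (hd : 0 < d)
    (hr : 0 < r) (hra : r < a) (hrd : r < d)
    (mu : Measure ℝ) [IsProbabilityMeasure mu] (hmu : mu (Set.Iic 0) = 0)
    (ubar usub : ℝ → ℝ)
    (hub_nonneg : ∀ x ∈ Set.Ici (-(p / a)), 0 ≤ ubar x)
    (hus_nonneg : ∀ x ∈ Set.Ici (-(p / a)), 0 ≤ usub x)
    (hub_cont : ContinuousOn ubar (Set.Ici (-(p / a))))
    (hus_cont : ContinuousOn usub (Set.Ici (-(p / a))))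
    (hub_lip : LocLipOn (Set.Ioi (-(p / a))) ubar)
    (hus_lip : LocLipOn (Set.Ioi (-(p / a))) usub)
    (hub_bdry : ubar (-(p / a)) = 0) (hus_bdry : usub (-(p / a)) = 0)
    (hub_growth : LinGrowth p a ubar) (hus_growth : LinGrowth p a usub)
    (hsuper : IsViscSupersol p lam d r a mu ubar (Set.Ioi (-(p / a))))
    (hsub : IsViscSubsol p lam d r a mu usub (Set.Ioi (-(p / a)))) :
    ∀ x : ℝ, -(p / a) ≤ x → usub x ≤ ubar x := by
  by_contra hcon
  push_neg at hcon
  obtain ⟨x₀, hx₀, hlt⟩ := hcon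
  have ha : 0 < a := hr.trans hra
  have hc0 : -(p / a) < 0 := by
    have : 0 < p / a := by positivity
    linarith
  have hpt : ∀ x : ℝ, -(p / a) ≤ x → 0 < p + r * x := by
    intro x hx
    have h : p / a * a = p := div_mul_cancel₀ p ha.ne'
    nlinarith [mul_le_mul_of_nonneg_right hx hr.le]
  -- basic quantities
  obtain ⟨A, hAdef⟩ : ∃ A : ℝ, A = usub x₀ - ubar x₀ := ⟨_, rfl⟩
  have hA : 0 < A := by rw [hAdef]; linarith
  have hX : 0 ≤ ubar x₀ := hub_nonneg x₀ hx₀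
  obtain ⟨θ, hθdef⟩ : ∃ θ : ℝ, θ = (ubar x₀ + A / 8) / (ubar x₀ + A / 4) := ⟨_, rfl⟩
  have hθ0 : 0 < θ := by rw [hθdef]; apply div_pos <;> linarith
  have hθ1 : θ < 1 := by
    rw [hθdef, div_lt_one (by linarith)]; linarith
  have hθX : (1 / θ) * ubar x₀ ≤ ubar x₀ + A / 4 := by
    rw [hθdef, one_div_div, div_mul_eq_mul_div,
      div_le_iff₀ (by linarith : (0:ℝ) < ubar x₀ + A / 8)]
    nlinarith
  obtain ⟨e, hedef⟩ : ∃ e : ℝ, e = d / r := ⟨_, rfl⟩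
  have he1 : 1 < e := by rw [hedef]; exact (one_lt_div hr).mpr hrd
  have he0 : 0 < e := by linarith
  have hgx₀ : 0 < gfun p r e x₀ := gfun_pos
  obtain ⟨η, hηdef⟩ : ∃ η : ℝ, η = A / (4 * gfun p r e x₀) := ⟨_, rfl⟩
  have hη : 0 < η := by rw [hηdef]; exact div_pos hA (mul_pos (by norm_num) hgx₀)
  have hηg : η * gfun p r e x₀ = A / 4 := by rw [hηdef]; field_simp
  obtain ⟨V₀, hV₀def⟩ : ∃ V₀ : ℝ, V₀ = usub x₀ - (1 / θ) * ubar x₀ - η * gfun p r e x₀ :=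
    ⟨_, rfl⟩
  have hV₀ : A / 2 ≤ V₀ := by rw [hV₀def]; rw [hAdef] at hA ⊢; linarith [hθX, hηg]
  have hV₀pos : 0 < V₀ := by linarith
  -- the doubling functional
  obtain ⟨Ψ, hΨdef⟩ : ∃ Ψ : ℕ → ℝ → ℝ → ℝ,
      Ψ = fun (n : ℕ) (x y : ℝ) => usub x - (1 / θ) * ubar y - ((n : ℝ) + 1) * (x - y) ^ 2
        - η * gfun p r e x := ⟨_, rfl⟩
  have hΨdiag : ∀ n, Ψ n x₀ x₀ = V₀ := by
    intro n; simp only [hΨdef, hV₀def]; ring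
  -- growth constants
  obtain ⟨c₁, c₂, hgr⟩ := hus_growth
  obtain ⟨M, hMdef⟩ : ∃ M : ℝ, M = (|c₁| + |c₂|) / r := ⟨_, rfl⟩
  have hM : 0 ≤ M := by rw [hMdef]; positivity
  -- choice of R
  have hRex : ∃ R : ℝ, x₀ ≤ R ∧ 1 ≤ R ∧ ∀ x, R ≤ x → usub x - η * gfun p r e x < V₀ := by
    have htt : Tendsto (fun x : ℝ => p + r * x) atTop atTop := by
      apply tendsto_atTop_add_const_left
      exact Tendsto.const_mul_atTop hr tendsto_id
    have ht : Tendsto (fun x : ℝ => (p + r * x) ^ (e - 1 : ℝ)) atTop atTop :=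
      (tendsto_rpow_atTop (by linarith : (0:ℝ) < e - 1)).comp htt
    obtain ⟨R₁, hR₁⟩ := eventually_atTop.mp (ht.eventually_ge_atTop ((M + 1) / η))
    refine ⟨max (max R₁ x₀) 1, le_max_of_le_left (le_max_right _ _), le_max_right _ _, ?_⟩
    intro x hx
    have hx1 : (1:ℝ) ≤ x := le_trans (le_max_right _ _) hx
    have hxR₁ : R₁ ≤ x := le_trans (le_trans (le_max_left _ _) (le_max_left _ _)) hx
    have hx0' : (0:ℝ) ≤ x := by linarith
    have hprx : 0 < p + r * x := by nlinarith
    have h1 : usub x ≤ M * (p + r * x) := by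
      have hgx := hgr x (by linarith)
      have hc1 : c₁ * x ≤ |c₁| * x :=
        mul_le_mul_of_nonneg_right (le_abs_self c₁) hx0'
      have hc2 : c₂ ≤ |c₂| * x := by
        calc c₂ ≤ |c₂| := le_abs_self c₂
          _ = |c₂| * 1 := (mul_one _).symm
          _ ≤ |c₂| * x := mul_le_mul_of_nonneg_left hx1 (abs_nonneg c₂)
      have hMr : M * (r * x) = (|c₁| + |c₂|) * x := by rw [hMdef]; field_simp
      have hMp : 0 ≤ M * p := mul_nonneg hM hp.le
      have hexp : M * (p + r * x) = M * p + M * (r * x) := by ring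
      linarith
    have h2 : (M + 1) * (p + r * x) ≤ η * gfun p r e x := by
      have hlb : (p + r * x) ^ (e : ℝ) ≤ gfun p r e x := gfun_lb he0.le hprx.le
      have hsplit : (p + r * x) ^ (e : ℝ) = (p + r * x) ^ (e - 1 : ℝ) * (p + r * x) := by
        rw [← Real.rpow_add_one hprx.ne' (e - 1)]; norm_num
      have hpow := hR₁ x hxR₁
      have h3 : (M + 1) / η * (p + r * x) ≤ (p + r * x) ^ (e - 1 : ℝ) * (p + r * x) :=
        mul_le_mul_of_nonneg_right hpow hprx.le
      have h4 : η * ((M + 1) / η * (p + r * x)) = (M + 1) * (p + r * x) := by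
        field_simp
      have h5 := mul_le_mul_of_nonneg_left h3 hη.le
      have h6 := mul_le_mul_of_nonneg_left hlb hη.le
      have h7 : η * ((p + r * x) ^ (e - 1 : ℝ) * (p + r * x)) = η * (p + r * x) ^ (e : ℝ) := by
        rw [hsplit]
      linarith
    have h8 : M * (p + r * x) - (M + 1) * (p + r * x) = -(p + r * x) := by ring
    linarith
  obtain ⟨R, hx₀R, hR1, hRgrow⟩ := hRex
  have hc0R : -(p / a) < R := by linarith
  -- upper bound Q₀ on [c0, R]
  obtain ⟨Q₀, hQ₀def⟩ : ∃ Q₀ : ℝ, Q₀ = |c₁| * (p / a + R) + |c₂| := ⟨_, rfl⟩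
  have hQ₀nonneg : 0 ≤ Q₀ := by
    have h1 : 0 ≤ p / a + R := by
      have : 0 ≤ p / a := by positivity
      linarith
    rw [hQ₀def]
    have h2 := mul_nonneg (abs_nonneg c₁) h1
    have := abs_nonneg c₂
    linarith
  have hQ₀ : ∀ x : ℝ, -(p / a) ≤ x → x ≤ R → usub x - η * gfun p r e x ≤ Q₀ := by
    intro x hxl hxr
    have h1 : usub x ≤ c₁ * x + c₂ := hgr x hxl
    have h2 : c₁ * x ≤ |c₁| * (p / a + R) := by
      calc c₁ * x ≤ |c₁ * x| := le_abs_self _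
        _ = |c₁| * |x| := abs_mul _ _
        _ ≤ |c₁| * (p / a + R) := by
            apply mul_le_mul_of_nonneg_left _ (abs_nonneg c₁)
            rw [abs_le]
            constructor <;> [linarith [hc0.le]; linarith]
    have h3 : 0 < η * gfun p r e x := mul_pos hη gfun_pos
    have h4 := le_abs_self c₂
    rw [hQ₀def]; linarith
  obtain ⟨R₂, hR₂def⟩ : ∃ R₂ : ℝ, R₂ = R + Real.sqrt (Q₀ + |V₀| + 1) + 1 := ⟨_, rfl⟩
  have hsq : Real.sqrt (Q₀ + |V₀| + 1) ^ 2 = Q₀ + |V₀| + 1 := by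
    rw [Real.sq_sqrt (by have := abs_nonneg V₀; linarith)]
  have hRR₂ : R ≤ R₂ := by
    rw [hR₂def]; have := Real.sqrt_nonneg (Q₀ + |V₀| + 1); linarith
  -- continuity of the doubling functional
  have hΨcont : ∀ n, ContinuousOn (fun z : ℝ × ℝ => Ψ n z.1 z.2)
      (Set.Ici (-(p / a)) ×ˢ Set.Ici (-(p / a))) := by
    intro n
    simp only [hΨdef]
    have h1 : ContinuousOn (fun z : ℝ × ℝ => usub z.1)
        (Set.Ici (-(p / a)) ×ˢ Set.Ici (-(p / a))) :=
      hus_cont.comp continuous_fst.continuousOn (fun z hz => hz.1)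
    have h2 : ContinuousOn (fun z : ℝ × ℝ => ubar z.2)
        (Set.Ici (-(p / a)) ×ˢ Set.Ici (-(p / a))) :=
      hub_cont.comp continuous_snd.continuousOn (fun z hz => hz.2)
    have h3 : Continuous (fun z : ℝ × ℝ => ((n : ℝ) + 1) * (z.1 - z.2) ^ 2) :=
      continuous_const.mul ((continuous_fst.sub continuous_snd).pow 2)
    have h4 : Continuous (fun z : ℝ × ℝ => η * gfun p r e z.1) :=
      (continuous_const.mul ((contDiff_gfun p r e).continuous.comp continuous_fst))
    exact ((h1.sub (continuousOn_const.mul h2)).sub h3.continuousOn).sub h4.continuousOn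
  -- the outside bound
  have hout : ∀ n : ℕ, ∀ x y : ℝ, -(p / a) ≤ x → -(p / a) ≤ y → (R < x ∨ R₂ < y) →
      Ψ n x y < Ψ n x₀ x₀ := by
    intro n x y hx hy hor
    rw [hΨdiag n]
    have hub0 : 0 ≤ (1 / θ) * ubar y :=
      mul_nonneg (one_div_nonneg.mpr hθ0.le) (hub_nonneg y hy)
    have hsqn : 0 ≤ ((n : ℝ) + 1) * (x - y) ^ 2 := by positivity
    have hg0 : 0 < η * gfun p r e x := mul_pos hη gfun_pos
    rcases le_or_gt x R with hxR | hxR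
    · rcases hor with h | h
      · linarith
      · have hΨle : Ψ n x y ≤ Q₀ - (x - y) ^ 2 := by
          have h5 := hQ₀ x hx hxR
          have h6 : (1:ℝ) * (x - y) ^ 2 ≤ ((n : ℝ) + 1) * (x - y) ^ 2 := by
            apply mul_le_mul_of_nonneg_right _ (sq_nonneg _)
            simp
          simp only [hΨdef]
          linarith
        have h7 : Real.sqrt (Q₀ + |V₀| + 1) + 1 ≤ y - x := by
          rw [hR₂def] at h; linarith
        have h8 : Q₀ + |V₀| + 1 ≤ (x - y) ^ 2 := by
          have h9 : (Real.sqrt (Q₀ + |V₀| + 1)) ^ 2 ≤ (y - x) ^ 2 := by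
            apply sq_le_sq'
            · have := Real.sqrt_nonneg (Q₀ + |V₀| + 1); linarith
            · linarith
          rw [hsq] at h9
          have h10 : (y - x) ^ 2 = (x - y) ^ 2 := by ring
          linarith
        have := abs_nonneg V₀
        have := le_abs_self V₀
        linarith
    · have := hRgrow x hxR.le
      simp only [hΨdef]
      linarith
  -- maximizers
  have hmax : ∀ n : ℕ, ∃ xm ym, -(p / a) ≤ xm ∧ -(p / a) ≤ ym ∧
      ∀ x y, -(p / a) ≤ x → -(p / a) ≤ y → Ψ n x y ≤ Ψ n xm ym :=
    fun n => exists_max_on_prod (Ψ n) (hΨcont n) x₀ R R₂ hx₀ hx₀R (le_trans hx₀R hRR₂)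
      (hout n)
  choose xs ys hxs hys hm using hmax

  obtain ⟨S, hSdef⟩ : ∃ S : ℕ → ℝ, S = fun n => Ψ n (xs n) (ys n) := ⟨_, rfl⟩
  have hSn : ∀ n, S n = Ψ n (xs n) (ys n) := fun n => by rw [hSdef]
  have hΨxy : ∀ (n : ℕ) (x y : ℝ), Ψ n x y
      = usub x - (1 / θ) * ubar y - ((n : ℝ) + 1) * (x - y) ^ 2 - η * gfun p r e x := by
    intro n x y; rw [hΨdef]
  have hSV : ∀ n, V₀ ≤ S n := by
    intro n
    rw [hSn n, ← hΨdiag n]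
    exact hm n x₀ x₀ hx₀ hx₀
  have hSanti : ∀ n m' : ℕ, n ≤ m' → S m' ≤ S n := by
    intro n m' hnm
    have hcast : ((n : ℝ) + 1) ≤ ((m' : ℝ) + 1) := by
      have : (n : ℝ) ≤ (m' : ℝ) := Nat.cast_le.mpr hnm
      linarith
    have h1 : Ψ m' (xs m') (ys m') ≤ Ψ n (xs m') (ys m') := by
      rw [hΨxy, hΨxy]
      have := mul_le_mul_of_nonneg_right hcast (sq_nonneg (xs m' - ys m'))
      linarith
    rw [hSn n, hSn m']
    exact le_trans h1 (hm n _ _ (hxs m') (hys m'))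
  have hxsR : ∀ n, xs n ≤ R := by
    intro n
    by_contra hcon2
    push_neg at hcon2
    have h1 := hout n (xs n) (ys n) (hxs n) (hys n) (Or.inl hcon2)
    rw [hΨdiag n] at h1
    have h2 := hSV n
    rw [hSn n] at h2
    linarith
  have hxgt : ∀ n, -(p / a) < xs n := by
    intro n
    rcases lt_or_eq_of_le (hxs n) with h | h
    · exact h
    · exfalso
      have h2 := hSV n
      rw [hSn n, hΨxy, ← h, hus_bdry] at h2
      have h3 : 0 ≤ (1 / θ) * ubar (ys n) :=
        mul_nonneg (one_div_nonneg.mpr hθ0.le) (hub_nonneg _ (hys n))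
      have h4 : 0 ≤ ((n : ℝ) + 1) * (-(p / a) - ys n) ^ 2 := by positivity
      have h5 : 0 < η * gfun p r e (-(p / a)) := mul_pos hη gfun_pos
      linarith
  -- bound for ubar on the compact interval
  obtain ⟨zC, hzCmem, hzCmax⟩ := isCompact_Icc.exists_isMaxOn
    (Set.nonempty_Icc.mpr hc0R.le) (hub_cont.mono Set.Icc_subset_Ici_self)
  obtain ⟨Cu, hCudef⟩ : ∃ Cu : ℝ, Cu = ubar zC := ⟨_, rfl⟩
  have hCu : ∀ z : ℝ, -(p / a) ≤ z → z ≤ R → ubar z ≤ Cu := by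
    intro z h1 h2
    rw [hCudef]
    exact hzCmax (Set.mem_Icc.mpr ⟨h1, h2⟩)
  have hCu0 : 0 ≤ Cu := by
    rw [hCudef]
    exact hub_nonneg zC (Set.Icc_subset_Ici_self hzCmem)
  -- diagonal comparison bound
  have hdiag : ∀ n : ℕ, ((n : ℝ) + 1) * (xs n - ys n) ^ 2 ≤ (1 / θ) * Cu := by
    intro n
    have h1 : Ψ n (xs n) (xs n) ≤ S n := by
      rw [hSn n]; exact hm n (xs n) (xs n) (hxs n) (hxs n)
    rw [hSn n, hΨxy, hΨxy] at h1
    have h2 : ubar (xs n) ≤ Cu := hCu _ (hxs n) (hxsR n)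
    have h3 : (1 / θ) * ubar (xs n) ≤ (1 / θ) * Cu :=
      mul_le_mul_of_nonneg_left h2 (one_div_nonneg.mpr hθ0.le)
    have h4 : 0 ≤ (1 / θ) * ubar (ys n) :=
      mul_nonneg (one_div_nonneg.mpr hθ0.le) (hub_nonneg _ (hys n))
    have h5 : ((n : ℝ) + 1) * (xs n - xs n) ^ 2 = 0 := by ring
    linarith
  -- modulus of continuity of usub at the left endpoint
  have hτ : ∀ εc : ℝ, 0 < εc → ∃ τ : ℝ, 0 < τ ∧
      ∀ z : ℝ, -(p / a) ≤ z → z ≤ -(p / a) + τ → usub z < εc := by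
    intro εc hεc
    have hcw : ContinuousWithinAt usub (Set.Ici (-(p / a))) (-(p / a)) :=
      hus_cont _ Set.self_mem_Ici
    have hmem : Set.Iio εc ∈ nhds (usub (-(p / a))) := by
      rw [hus_bdry]; exact Iio_mem_nhds hεc
    have hev : usub ⁻¹' Set.Iio εc ∈ nhdsWithin (-(p / a)) (Set.Ici (-(p / a))) :=
      hcw hmem
    rw [Metric.mem_nhdsWithin_iff] at hev
    obtain ⟨ε', hε', hball⟩ := hev
    refine ⟨ε' / 2, by linarith, fun z hz1 hz2 => ?_⟩
    have : z ∈ Metric.ball (-(p / a)) ε' ∩ Set.Ici (-(p / a)) := by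
      constructor
      · rw [Metric.mem_ball, Real.dist_eq, abs_lt]
        constructor <;> linarith
      · exact hz1
    exact hball this

  -- choice of small parameters
  obtain ⟨εE, hεEdef⟩ : ∃ εE : ℝ, εE = d * V₀ / (8 * lam) := ⟨_, rfl⟩
  have hεE : 0 < εE := by rw [hεEdef]; positivity
  obtain ⟨τE, hτE0, hτE⟩ := hτ εE hεE
  obtain ⟨τV, hτV0, hτV⟩ := hτ V₀ hV₀pos
  obtain ⟨ε, hεdef⟩ : ∃ ε : ℝ, ε = min (d * V₀ / (16 * a)) (τE ^ 2) := ⟨_, rfl⟩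
  have hε0 : 0 < ε := by
    rw [hεdef]
    apply lt_min (by positivity) (by positivity)
  have hετE : ε ≤ τE ^ 2 := by rw [hεdef]; exact min_le_right _ _
  have hεa : ε ≤ d * V₀ / (16 * a) := by rw [hεdef]; exact min_le_left _ _
  -- index selection
  have hbdd : BddBelow (Set.range S) := ⟨V₀, fun v ⟨n, hn⟩ => hn ▸ hSV n⟩
  obtain ⟨N, hN⟩ : ∃ N : ℕ, S N < (⨅ n, S n) + ε := by
    apply exists_lt_of_ciInf_lt
    have : (⨅ n, S n) ≤ (⨅ n, S n) := le_refl _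
    linarith [hε0]
  obtain ⟨N₃, hN₃⟩ := exists_nat_gt ((1 / θ) * Cu / τV ^ 2)
  obtain ⟨m, hmdef⟩ : ∃ m : ℕ, m = 2 * N + N₃ + 1 := ⟨_, rfl⟩
  have hNm : N ≤ m := by omega
  have hN₃m : N₃ ≤ m := by omega
  have hmcast : ((m : ℝ)) ≥ 2 * N + 1 := by
    rw [hmdef]; push_cast; linarith [Nat.cast_nonneg (α := ℝ) N₃]
  have hm2 : ((m : ℝ) + 1) / 2 ≤ (m : ℝ) - N := by
    have : (N : ℝ) ≥ 0 := Nat.cast_nonneg N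
    linarith
  have hkey : ((m : ℝ) - N) * (xs m - ys m) ^ 2 ≤ S N - S m := by
    have h1 : Ψ N (xs m) (ys m) ≤ S N := by
      rw [hSn N]; exact hm N _ _ (hxs m) (hys m)
    have h2 : Ψ N (xs m) (ys m)
        = Ψ m (xs m) (ys m) + ((m : ℝ) - N) * (xs m - ys m) ^ 2 := by
      rw [hΨxy, hΨxy]; ring
    rw [hSn m]
    linarith
  have hSmLinf : (⨅ n, S n) ≤ S m := ciInf_le hbdd m
  have hεb : ((m : ℝ) - N) * (xs m - ys m) ^ 2 ≤ ε := by linarith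
  have hdsq0 : 0 ≤ (xs m - ys m) ^ 2 := sq_nonneg _
  have hmd2 : ((m : ℝ) + 1) * (xs m - ys m) ^ 2 ≤ 2 * ε := by
    have h1 := mul_le_mul_of_nonneg_right hm2 hdsq0
    linarith
  have hdsqε : (xs m - ys m) ^ 2 ≤ ε := by
    have h1 : (1 : ℝ) ≤ (m : ℝ) - N := by
      have : (N : ℝ) ≥ 0 := Nat.cast_nonneg N
      linarith
    have h2 := mul_le_mul_of_nonneg_right h1 hdsq0
    linarith
  have hdsqτE : (xs m - ys m) ^ 2 ≤ τE ^ 2 := le_trans hdsqε hετE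
  -- interiority of ys m
  have hygt : -(p / a) < ys m := by
    rcases lt_or_eq_of_le (hys m) with h | h
    · exact h
    · exfalso
      have hub0 : ubar (ys m) = 0 := by rw [← h, hub_bdry]
      have hd1 := hdiag m
      have hd2 : (1 / θ) * Cu < τV ^ 2 * ((m : ℝ) + 1) := by
        rw [div_lt_iff₀ (by positivity : (0:ℝ) < τV ^ 2)] at hN₃
        have h6 : (N₃ : ℝ) ≤ (m : ℝ) + 1 := by
          have : (N₃ : ℝ) ≤ (m : ℝ) := Nat.cast_le.mpr hN₃m
          linarith
        have h7 : (N₃ : ℝ) * τV ^ 2 ≤ ((m : ℝ) + 1) * τV ^ 2 :=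
          mul_le_mul_of_nonneg_right h6 (sq_nonneg τV)
        linarith
      have hd3 : (xs m - ys m) ^ 2 < τV ^ 2 := by
        have hm1 : (0 : ℝ) < (m : ℝ) + 1 := by positivity
        have h7 : ((m : ℝ) + 1) * (xs m - ys m) ^ 2 < ((m : ℝ) + 1) * τV ^ 2 := by
          have h8 : τV ^ 2 * ((m : ℝ) + 1) = ((m : ℝ) + 1) * τV ^ 2 := by ring
          linarith
        exact lt_of_mul_lt_mul_left h7 hm1.le
      have hd4 : xs m ≤ -(p / a) + τV := by
        rw [← h] at hd3
        have h9 : xs m - -(p / a) < τV := by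
          apply sq_lt_imp _ hτV0 hd3
          linarith [hxs m]
        linarith
      have hd5 : usub (xs m) < V₀ := hτV _ (hxs m) hd4
      have h2 := hSV m
      rw [hSn m, hΨxy] at h2
      have h3 : 0 ≤ ((m : ℝ) + 1) * (xs m - ys m) ^ 2 := by positivity
      have h4 : 0 < η * gfun p r e (xs m) := mul_pos hη gfun_pos
      rw [hub0] at h2
      have h5 : (1 / θ) * (0:ℝ) = 0 := by ring
      rw [h5] at h2
      linarith

  -- the supersolution test function
  obtain ⟨φ₂, hφ₂def⟩ : ∃ φ₂ : ℝ → ℝ, φ₂ = fun y : ℝ =>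
      ubar (ys m) - θ * ((m : ℝ) + 1) * ((xs m - y) ^ 2 - (xs m - ys m) ^ 2) := ⟨_, rfl⟩
  have hφ₂cd : ContDiff ℝ 1 φ₂ := by
    rw [hφ₂def]
    exact contDiff_const.sub (contDiff_const.mul
      (((contDiff_const.sub contDiff_id).pow 2).sub contDiff_const))
  have hφ₂eq : φ₂ (ys m) = ubar (ys m) := by
    simp only [hφ₂def]; ring
  have hφ₂der : HasDerivAt φ₂ (2 * θ * ((m : ℝ) + 1) * (xs m - ys m)) (ys m) := by
    rw [hφ₂def]
    have h1 : HasDerivAt (fun y : ℝ => xs m - y) (-1) (ys m) :=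
      (hasDerivAt_id (ys m)).const_sub (xs m)
    have h2 := (((h1.pow 2).sub_const ((xs m - ys m) ^ 2)).const_mul
      (θ * ((m : ℝ) + 1))).const_sub (ubar (ys m))
    convert h2 using 1
    all_goals first | rfl | (simp; ring)
  have hφ₂min : ∀ y ∈ Set.Ici (-(p / a)), ubar (ys m) - φ₂ (ys m) ≤ ubar y - φ₂ y := by
    intro y hy
    have h5 := hm m (xs m) y (hxs m) hy
    rw [hΨxy, hΨxy] at h5
    have hstep : (1 / θ) * ubar (ys m) - (1 / θ) * ubar y
        ≤ ((m : ℝ) + 1) * ((xs m - y) ^ 2 - (xs m - ys m) ^ 2) := by linarith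
    have h8 := mul_le_mul_of_nonneg_left hstep hθ0.le
    have h9 : θ * ((1 / θ) * ubar (ys m) - (1 / θ) * ubar y) = ubar (ys m) - ubar y := by
      field_simp
    simp only [hφ₂def]
    rw [h9] at h8
    have h10 : θ * (((m : ℝ) + 1) * ((xs m - y) ^ 2 - (xs m - ys m) ^ 2))
        = θ * ((m : ℝ) + 1) * ((xs m - y) ^ 2 - (xs m - ys m) ^ 2) := by ring
    rw [h10] at h8
    linarith
  have hsup := hsuper (ys m) (Set.mem_Ioi.mpr hygt) φ₂ hφ₂cd hφ₂eq hφ₂min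
  have hder2 : deriv φ₂ (ys m) = 2 * θ * ((m : ℝ) + 1) * (xs m - ys m) := hφ₂der.deriv
  have h2a : 1 - 2 * θ * ((m : ℝ) + 1) * (xs m - ys m) ≤ 0 := by
    have := le_trans (le_max_left _ (Lphi p lam d r a mu ubar φ₂ (ys m))) hsup
    rw [hder2] at this
    exact this
  have h2b : drift p r a (ys m) * (2 * θ * ((m : ℝ) + 1) * (xs m - ys m))
      - (lam + d) * ubar (ys m) + lam * Iop p a mu ubar (ys m) ≤ 0 := by
    have := le_trans (le_max_right (1 - deriv φ₂ (ys m)) _) hsup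
    rw [Lphi, hder2] at this
    exact this
  -- positivity of the increment
  have hddpos : 0 < xs m - ys m := by
    by_contra hdd
    push_neg at hdd
    have hθm : (0:ℝ) ≤ 2 * θ * ((m : ℝ) + 1) := by positivity
    have := mul_nonpos_of_nonneg_of_nonpos hθm hdd
    linarith
  -- the subsolution test function
  obtain ⟨φ₁, hφ₁def⟩ : ∃ φ₁ : ℝ → ℝ, φ₁ = fun x : ℝ =>
      usub (xs m) + ((m : ℝ) + 1) * ((x - ys m) ^ 2 - (xs m - ys m) ^ 2)
        + η * (gfun p r e x - gfun p r e (xs m)) := ⟨_, rfl⟩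
  have hφ₁cd : ContDiff ℝ 1 φ₁ := by
    rw [hφ₁def]
    exact (contDiff_const.add (contDiff_const.mul
      (((contDiff_id.sub contDiff_const).pow 2).sub contDiff_const))).add
      (contDiff_const.mul ((contDiff_gfun p r e).sub contDiff_const))
  have hφ₁eq : φ₁ (xs m) = usub (xs m) := by
    simp only [hφ₁def]; ring
  have hφ₁der : HasDerivAt φ₁
      (2 * ((m : ℝ) + 1) * (xs m - ys m) + η * gder p r e (xs m)) (xs m) := by
    rw [hφ₁def]
    have h1 : HasDerivAt (fun x : ℝ => x - ys m) 1 (xs m) :=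
      (hasDerivAt_id (xs m)).sub_const (ys m)
    have h2 := (((h1.pow 2).sub_const ((xs m - ys m) ^ 2)).const_mul
      (((m : ℝ) + 1))).const_add (usub (xs m))
    have h3 := ((hasDerivAt_gfun p r e (xs m)).sub_const (gfun p r e (xs m))).const_mul η
    convert h2.add h3 using 1
    all_goals first | rfl | (simp; ring)
  have hφ₁max : ∀ y ∈ Set.Ici (-(p / a)), usub y - φ₁ y ≤ usub (xs m) - φ₁ (xs m) := by
    intro y hy
    have h5 := hm m y (ys m) hy (hys m)
    rw [hΨxy, hΨxy] at h5
    simp only [hφ₁def]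
    linarith
  have hsb := hsub (xs m) (Set.mem_Ioi.mpr (hxgt m)) φ₁ hφ₁cd hφ₁eq hφ₁max
  have hder1 : deriv φ₁ (xs m)
      = 2 * ((m : ℝ) + 1) * (xs m - ys m) + η * gder p r e (xs m) := hφ₁der.deriv
  have hgderpos : 0 < gder p r e (xs m) := gder_pos hr he0 (hpt _ (hxs m))
  have h1a : 1 - (2 * ((m : ℝ) + 1) * (xs m - ys m) + η * gder p r e (xs m)) < 0 := by
    have hZ : (0:ℝ) ≤ 2 * ((m : ℝ) + 1) * (xs m - ys m) := by positivity
    have h6 : θ * (2 * ((m : ℝ) + 1) * (xs m - ys m))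
        ≤ 1 * (2 * ((m : ℝ) + 1) * (xs m - ys m)) :=
      mul_le_mul_of_nonneg_right hθ1.le hZ
    have h7 : θ * (2 * ((m : ℝ) + 1) * (xs m - ys m))
        = 2 * θ * ((m : ℝ) + 1) * (xs m - ys m) := by ring
    have h8 : 0 < η * gder p r e (xs m) := mul_pos hη hgderpos
    rw [h7] at h6
    linarith
  have hL1 : 0 ≤ drift p r a (xs m) * (2 * ((m : ℝ) + 1) * (xs m - ys m)
      + η * gder p r e (xs m)) - (lam + d) * usub (xs m)
      + lam * Iop p a mu usub (xs m) := by
    rcases le_max_iff.mp hsb with h | h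
    · rw [hder1] at h; linarith
    · rw [Lphi, hder1] at h; exact h

  -- integrability facts
  have hβy : 0 < ys m + p / a := by linarith
  have hβxy : ys m + p / a ≤ xs m + p / a := by linarith
  have hIu_b : IntegrableOn (fun u => usub (xs m - u)) (Set.Ioc 0 (ys m + p / a)) mu := by
    apply integrableOn_shift hus_cont mu (hxs m)
    intro u hu
    simp only [Set.mem_Ioc] at hu
    simp only [Set.mem_Icc]
    constructor <;> linarith [hu.1, hu.2]
  have hIu_bc : IntegrableOn (fun u => usub (xs m - u))
      (Set.Ioc (ys m + p / a) (xs m + p / a)) mu := by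
    apply integrableOn_shift hus_cont mu (hxs m)
    intro u hu
    simp only [Set.mem_Ioc] at hu
    simp only [Set.mem_Icc]
    constructor <;> linarith [hu.1, hu.2]
  have hIb_b : IntegrableOn (fun u => ubar (ys m - u)) (Set.Ioc 0 (ys m + p / a)) mu := by
    apply integrableOn_shift hub_cont mu (hys m)
    intro u hu
    simp only [Set.mem_Ioc] at hu
    simp only [Set.mem_Icc]
    constructor <;> linarith [hu.1, hu.2]
  -- splitting the integral
  have hsplit : Iop p a mu usub (xs m)
      = (∫ u in Set.Ioc 0 (ys m + p / a), usub (xs m - u) ∂mu)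
        + ∫ u in Set.Ioc (ys m + p / a) (xs m + p / a), usub (xs m - u) ∂mu := by
    rw [Iop, ← Set.Ioc_union_Ioc_eq_Ioc hβy.le hβxy]
    exact setIntegral_union (Set.Ioc_disjoint_Ioc_of_le le_rfl) measurableSet_Ioc hIu_b hIu_bc
  have htoReal : ∀ s : Set ℝ, (mu s).toReal ≤ 1 := by
    intro s
    have h1 : mu s ≤ 1 := prob_le_one
    have := ENNReal.toReal_mono ENNReal.one_ne_top h1
    simpa using this
  have hddτE : xs m - ys m ≤ τE := sq_le_imp hddpos.le hτE0.le hdsqτE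
  -- bound for the extra piece
  have hEbound : (∫ u in Set.Ioc (ys m + p / a) (xs m + p / a), usub (xs m - u) ∂mu)
      ≤ εE := by
    have hpw : ∀ u ∈ Set.Ioc (ys m + p / a) (xs m + p / a), usub (xs m - u) ≤ εE := by
      intro u hu
      simp only [Set.mem_Ioc] at hu
      apply le_of_lt (hτE _ ?_ ?_)
      · linarith [hu.2]
      · linarith [hu.1, hddτE]
    calc (∫ u in Set.Ioc (ys m + p / a) (xs m + p / a), usub (xs m - u) ∂mu)
        ≤ ∫ _ in Set.Ioc (ys m + p / a) (xs m + p / a), εE ∂mu :=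
          setIntegral_mono_on hIu_bc
            (integrableOn_const (measure_lt_top mu _).ne) measurableSet_Ioc hpw
      _ = (mu (Set.Ioc (ys m + p / a) (xs m + p / a))).toReal * εE := by
          rw [setIntegral_const]; simp [smul_eq_mul, measureReal_def]
      _ ≤ 1 * εE := mul_le_mul_of_nonneg_right (htoReal _) hεE.le
      _ = εE := one_mul _
  -- the key identity for W
  have hWid : usub (xs m) - (1 / θ) * ubar (ys m)
      = S m + ((m : ℝ) + 1) * (xs m - ys m) ^ 2 + η * gfun p r e (xs m) := by
    rw [hSn m, hΨxy]; ring
  have hWpos : 0 < usub (xs m) - (1 / θ) * ubar (ys m) := by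
    rw [hWid]
    have h1 : 0 ≤ ((m : ℝ) + 1) * (xs m - ys m) ^ 2 := by positivity
    have h2 : 0 < η * gfun p r e (xs m) := mul_pos hη gfun_pos
    linarith [hSV m]
  -- the main integral comparison
  have hmono : (∫ u in Set.Ioc 0 (ys m + p / a), usub (xs m - u) ∂mu)
      - (1 / θ) * ∫ u in Set.Ioc 0 (ys m + p / a), ubar (ys m - u) ∂mu
      ≤ usub (xs m) - (1 / θ) * ubar (ys m) := by
    have heq : (1 / θ) * ∫ u in Set.Ioc 0 (ys m + p / a), ubar (ys m - u) ∂mu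
        = ∫ u in Set.Ioc 0 (ys m + p / a), (1 / θ) * ubar (ys m - u) ∂mu :=
      (integral_const_mul _ _).symm
    rw [heq, ← integral_sub hIu_b (hIb_b.const_mul (1 / θ))]
    have hpw : ∀ u ∈ Set.Ioc 0 (ys m + p / a),
        usub (xs m - u) - (1 / θ) * ubar (ys m - u)
          ≤ usub (xs m) - (1 / θ) * ubar (ys m) := by
      intro u hu
      simp only [Set.mem_Ioc] at hu
      have hxu : -(p / a) ≤ xs m - u := by linarith [hu.2]
      have hyu : -(p / a) ≤ ys m - u := by linarith [hu.2]
      have h5 := hm m (xs m - u) (ys m - u) hxu hyu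
      rw [hΨxy, hΨxy] at h5
      have hiden : xs m - u - (ys m - u) = xs m - ys m := by ring
      rw [hiden] at h5
      have hg : gfun p r e (xs m - u) ≤ gfun p r e (xs m) :=
        gfun_mono hr he0.le (hpt _ hxu).le (by linarith [hu.1])
      have hgη := mul_le_mul_of_nonneg_left hg hη.le
      linarith
    calc (∫ u in Set.Ioc 0 (ys m + p / a),
            (usub (xs m - u) - (1 / θ) * ubar (ys m - u)) ∂mu)
        ≤ ∫ _ in Set.Ioc 0 (ys m + p / a),
            (usub (xs m) - (1 / θ) * ubar (ys m)) ∂mu :=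
          setIntegral_mono_on (hIu_b.sub (hIb_b.const_mul (1 / θ)))
            (integrableOn_const (measure_lt_top mu _).ne) measurableSet_Ioc hpw
      _ = (mu (Set.Ioc 0 (ys m + p / a))).toReal
            * (usub (xs m) - (1 / θ) * ubar (ys m)) := by
          rw [setIntegral_const]; simp [smul_eq_mul, measureReal_def]
      _ ≤ 1 * (usub (xs m) - (1 / θ) * ubar (ys m)) :=
          mul_le_mul_of_nonneg_right (htoReal _) hWpos.le
      _ = usub (xs m) - (1 / θ) * ubar (ys m) := one_mul _
  have hIopub : Iop p a mu ubar (ys m)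
      = ∫ u in Set.Ioc 0 (ys m + p / a), ubar (ys m - u) ∂mu := rfl
  have hIdiff : Iop p a mu usub (xs m) - (1 / θ) * Iop p a mu ubar (ys m)
      ≤ (usub (xs m) - (1 / θ) * ubar (ys m)) + εE := by
    rw [hsplit, hIopub]
    linarith
  -- rescaled supersolution inequality
  have hsuper' : drift p r a (ys m) * (2 * ((m : ℝ) + 1) * (xs m - ys m))
      ≤ (lam + d) * ((1 / θ) * ubar (ys m)) - lam * ((1 / θ) * Iop p a mu ubar (ys m)) := by
    have hstep2 : drift p r a (ys m) * (2 * θ * ((m : ℝ) + 1) * (xs m - ys m))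
        ≤ (lam + d) * ubar (ys m) - lam * Iop p a mu ubar (ys m) := by linarith
    have h2c := mul_le_mul_of_nonneg_left hstep2 (one_div_nonneg.mpr hθ0.le)
    calc drift p r a (ys m) * (2 * ((m : ℝ) + 1) * (xs m - ys m))
        = (1 / θ) * (drift p r a (ys m) * (2 * θ * ((m : ℝ) + 1) * (xs m - ys m))) := by
          field_simp
      _ ≤ (1 / θ) * ((lam + d) * ubar (ys m) - lam * Iop p a mu ubar (ys m)) := h2c
      _ = (lam + d) * ((1 / θ) * ubar (ys m))
            - lam * ((1 / θ) * Iop p a mu ubar (ys m)) := by ring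
  -- drift comparison
  have hdd2' : (drift p r a (xs m) - drift p r a (ys m))
      * (2 * ((m : ℝ) + 1) * (xs m - ys m))
      ≤ 2 * a * (((m : ℝ) + 1) * (xs m - ys m) ^ 2) := by
    have hds := drift_sub_le (p := p) hr hra (xs m) (ys m)
    rw [abs_of_pos hddpos] at hds
    have hZ0 : (0:ℝ) ≤ 2 * ((m : ℝ) + 1) * (xs m - ys m) := by positivity
    have := mul_le_mul_of_nonneg_right hds hZ0
    have hidZ : a * (xs m - ys m) * (2 * ((m : ℝ) + 1) * (xs m - ys m))
        = 2 * a * (((m : ℝ) + 1) * (xs m - ys m) ^ 2) := by ring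
    linarith
  -- growth function comparison
  have hgd : drift p r a (xs m) * gder p r e (xs m) ≤ d * gfun p r e (xs m) :=
    drift_gder_le hp hr hra hd hedef (hxs m)
  have hgd' := mul_le_mul_of_nonneg_left hgd hη.le
  -- final assembly
  have hIlam := mul_le_mul_of_nonneg_left hIdiff hlam.le
  have hK2 := mul_le_mul_of_nonneg_left hmd2 (by positivity : (0:ℝ) ≤ 2 * a)
  have hid2 : 2 * a * (2 * ε) ≤ d * V₀ / 4 := by
    have h1 := mul_le_mul_of_nonneg_left hεa (by positivity : (0:ℝ) ≤ 4 * a)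
    have h2 : 4 * a * (d * V₀ / (16 * a)) = d * V₀ / 4 := by field_simp; ring
    linarith
  have hlamεE : lam * εE = d * V₀ / 8 := by
    rw [hεEdef]; field_simp
  have hdK : 0 ≤ d * (((m : ℝ) + 1) * (xs m - ys m) ^ 2) := by positivity
  have hfin : d * V₀ ≤ d * V₀ / 4 + d * V₀ / 8 := by
    have hSVm := hSV m
    have hdSV := mul_le_mul_of_nonneg_left hSVm hd.le
    have hWd : d * (usub (xs m) - (1 / θ) * ubar (ys m))
        = d * (S m + ((m : ℝ) + 1) * (xs m - ys m) ^ 2 + η * gfun p r e (xs m)) := by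
      rw [hWid]
    linarith only [hL1, hsuper', hIlam, hdd2', hgd', hWd, hK2, hid2, hlamεE, hdK, hdSV]
  have : 0 < d * V₀ := by positivity
  linarith
end
end

section
/- Fix x₀ ∈ (−p/α,∞), let g : [−p/α, x₀] → [0,∞) be continuous and nondecreasing with g(x₀) > 0, and set h = (p + α·x₀·1{x₀<0})/(2(2λ+δ)). For a bounded, continuous, nondecreasing, positive function w on [x₀, x₀+h), define T_w(x) = g(x₀) + ∫_{x₀}^{x} [ (λ+δ)·w(s) − λ·∫_{(0, s−x₀]} w(s−y) dμ(y) − λ·∫_{(s−x₀, s+p/α]} g(s−y) dμ(y) ] / c(s) ds for x ∈ [x₀, x₀+h). Then for any two bounded, continuous, nondecreasing, positive functions w₁, w₂ on [x₀, x₀+h), sup_{x ∈ [x₀, x₀+h)} |T_{w₁}(x) − T_{w₂}(x)| ≤ (1/2)·sup_{x ∈ [x₀, x₀+h)} |w₁(x) − w₂(x)|. -/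
open MeasureTheory Set Filter

noncomputable section

/-- The operator T_w of Lemma 4.2's contraction argument. -/
def Tcontract (p lam d r a x₀ : ℝ) (mu : Measure ℝ) (g w : ℝ → ℝ) (x : ℝ) : ℝ :=
  g x₀ + ∫ s in x₀..x,
    ((lam + d) * w s - lam * (∫ y in Set.Ioc (0 : ℝ) (s - x₀), w (s - y) ∂mu)
        - lam * (∫ y in Set.Ioc (s - x₀) (s + p / a), g (s - y) ∂mu))
      / drift p r a s

lemma drift_eq_min (p r a x : ℝ) (hra : r ≤ a) :
    drift p r a x = p + min (r * x) (a * x) := by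
  unfold drift
  rcases le_or_gt 0 x with hx | hx
  · rw [if_pos hx, min_eq_left (by nlinarith)]
  · rw [if_neg (not_le.mpr hx), min_eq_right (by nlinarith)]

lemma drift_cont (p r a : ℝ) (hra : r ≤ a) : Continuous (drift p r a) := by
  have : drift p r a = fun x => p + min (r * x) (a * x) :=
    funext fun x => drift_eq_min p r a x hra
  rw [this]
  exact continuous_const.add ((continuous_const.mul continuous_id).min
    (continuous_const.mul continuous_id))

lemma drift_mono (p r a : ℝ) (hr : 0 ≤ r) (ha : 0 ≤ a) (hra : r ≤ a) :
    Monotone (drift p r a) := by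
  intro x y hxy
  rw [drift_eq_min p r a x hra, drift_eq_min p r a y hra]
  exact add_le_add_right (min_le_min (by nlinarith) (by nlinarith)) p

lemma drift_pos (p r a x : ℝ) (hp : 0 < p) (hr : 0 ≤ r) (ha : 0 < a)
    (hx : -(p / a) < x) : 0 < drift p r a x := by
  unfold drift
  rcases le_or_gt 0 x with h | h
  · rw [if_pos h]; nlinarith
  · rw [if_neg (not_le.mpr h)]
    nlinarith [mul_lt_mul_of_pos_left hx ha, mul_div_cancel₀ p ha.ne']

lemma meas_paramIntegral (mu : Measure ℝ) [SFinite mu]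
    (w' : ℝ → ℝ) (hw' : Measurable w') (l u : ℝ → ℝ)
    (hl : Measurable l) (hu : Measurable u) :
    Measurable (fun s => ∫ y in Set.Ioc (l s) (u s), w' (s - y) ∂mu) := by
  have hset : MeasurableSet {z : ℝ × ℝ | l z.1 < z.2 ∧ z.2 ≤ u z.1} :=
    (measurableSet_lt (hl.comp measurable_fst) measurable_snd).inter
      (measurableSet_le measurable_snd (hu.comp measurable_fst))
  have hF : StronglyMeasurable (fun z : ℝ × ℝ =>
      Set.indicator {z : ℝ × ℝ | l z.1 < z.2 ∧ z.2 ≤ u z.1}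
        (fun z => w' (z.1 - z.2)) z) :=
    ((hw'.comp (measurable_fst.sub measurable_snd)).indicator hset).stronglyMeasurable
  have key : (fun s => ∫ y, Set.indicator {z : ℝ × ℝ | l z.1 < z.2 ∧ z.2 ≤ u z.1}
        (fun z => w' (z.1 - z.2)) (s, y) ∂mu)
      = fun s => ∫ y in Set.Ioc (l s) (u s), w' (s - y) ∂mu := by
    funext s
    rw [← MeasureTheory.integral_indicator measurableSet_Ioc]
    refine integral_congr_ae (Filter.Eventually.of_forall fun y => ?_)
    simp only [Set.indicator_apply, Set.mem_setOf_eq, Set.mem_Ioc]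
  rw [← key]
  exact hF.integral_prod_right'.measurable

lemma integrable_comp_bdd (mu : Measure ℝ) [IsFiniteMeasure mu]
    (w' : ℝ → ℝ) (hw' : Measurable w') (Mw : ℝ) (hb : ∀ t, |w' t| ≤ Mw)
    (s lo hi : ℝ) : MeasureTheory.IntegrableOn (fun y => w' (s - y)) (Set.Ioc lo hi) mu :=
  Integrable.mono' (integrable_const Mw)
    ((hw'.comp (measurable_const.sub measurable_id)).aestronglyMeasurable)
    (ae_of_all _ fun y => by simpa [Real.norm_eq_abs] using hb (s - y))

lemma integrand_intervalIntegrable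
    (p lam d r a x₀ h c0 Mg Mw : ℝ) (mu : Measure ℝ) [IsProbabilityMeasure mu]
    (hlam : 0 ≤ lam) (hd : 0 ≤ d) (hc0 : 0 < c0)
    (hcle : ∀ s, x₀ ≤ s → c0 ≤ drift p r a s)
    (hra : r ≤ a)
    (g w : ℝ → ℝ)
    (hg_cont : ContinuousOn g (Set.Icc (-(p / a)) x₀))
    (hMg : 0 ≤ Mg) (hg_bdd : ∀ t ∈ Set.Icc (-(p / a)) x₀, |g t| ≤ Mg)
    (hw_cont : ContinuousOn w (Set.Ico x₀ (x₀ + h)))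
    (hMw : 0 ≤ Mw) (hw_bdd : ∀ t ∈ Set.Ico x₀ (x₀ + h), |w t| ≤ Mw)
    (x : ℝ) (hx1 : x₀ ≤ x) (hx2 : x < x₀ + h) :
    IntervalIntegrable (fun s =>
      ((lam + d) * w s - lam * (∫ y in Set.Ioc (0 : ℝ) (s - x₀), w (s - y) ∂mu)
        - lam * (∫ y in Set.Ioc (s - x₀) (s + p / a), g (s - y) ∂mu)) / drift p r a s)
      volume x₀ x := by
  classical
  rw [intervalIntegrable_iff_integrableOn_Ioc_of_le hx1]
  set w' : ℝ → ℝ := (Set.Ico x₀ (x₀ + h)).piecewise w (fun _ => 0) with hw'def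
  set g' : ℝ → ℝ := (Set.Icc (-(p / a)) x₀).piecewise g (fun _ => 0) with hg'def
  have hw'm : Measurable w' :=
    ContinuousOn.measurable_piecewise hw_cont continuousOn_const measurableSet_Ico
  have hg'm : Measurable g' :=
    ContinuousOn.measurable_piecewise hg_cont continuousOn_const measurableSet_Icc
  have hdm : Measurable (drift p r a) := (drift_cont p r a hra).measurable
  have hA : Measurable (fun s => ∫ y in Set.Ioc (0 : ℝ) (s - x₀), w' (s - y) ∂mu) := by
    have := meas_paramIntegral mu w' hw'm (fun _ => (0 : ℝ)) (fun s => s - x₀)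
      measurable_const (measurable_id.sub measurable_const)
    simpa using this
  have hB : Measurable (fun s => ∫ y in Set.Ioc (s - x₀) (s + p / a), g' (s - y) ∂mu) :=
    meas_paramIntegral mu g' hg'm (fun s => s - x₀) (fun s => s + p / a)
      (measurable_id.sub measurable_const) (measurable_id.add measurable_const)
  have hG : Measurable (fun s =>
      ((lam + d) * w' s - lam * (∫ y in Set.Ioc (0 : ℝ) (s - x₀), w' (s - y) ∂mu)
        - lam * (∫ y in Set.Ioc (s - x₀) (s + p / a), g' (s - y) ∂mu)) / drift p r a s) :=
    (((measurable_const.mul hw'm).sub (measurable_const.mul hA)).sub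
      (measurable_const.mul hB)).div hdm
  have heq : ∀ s ∈ Set.Ioc x₀ x,
      ((lam + d) * w s - lam * (∫ y in Set.Ioc (0 : ℝ) (s - x₀), w (s - y) ∂mu)
        - lam * (∫ y in Set.Ioc (s - x₀) (s + p / a), g (s - y) ∂mu)) / drift p r a s
      = ((lam + d) * w' s - lam * (∫ y in Set.Ioc (0 : ℝ) (s - x₀), w' (s - y) ∂mu)
        - lam * (∫ y in Set.Ioc (s - x₀) (s + p / a), g' (s - y) ∂mu)) / drift p r a s := by
    intro s hs
    have hsS : s ∈ Set.Ico x₀ (x₀ + h) := ⟨hs.1.le, lt_of_le_of_lt hs.2 hx2⟩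
    have h1 : w s = w' s := (Set.piecewise_eq_of_mem _ _ _ hsS).symm
    have h2 : (∫ y in Set.Ioc (0 : ℝ) (s - x₀), w (s - y) ∂mu)
        = ∫ y in Set.Ioc (0 : ℝ) (s - x₀), w' (s - y) ∂mu := by
      refine setIntegral_congr_fun measurableSet_Ioc fun y hy => ?_
      have hm : s - y ∈ Set.Ico x₀ (x₀ + h) :=
        ⟨by linarith [hy.2], by linarith [hy.1, hsS.2]⟩
      exact (Set.piecewise_eq_of_mem _ _ _ hm).symm
    have h3 : (∫ y in Set.Ioc (s - x₀) (s + p / a), g (s - y) ∂mu)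
        = ∫ y in Set.Ioc (s - x₀) (s + p / a), g' (s - y) ∂mu := by
      refine setIntegral_congr_fun measurableSet_Ioc fun y hy => ?_
      have hm : s - y ∈ Set.Icc (-(p / a)) x₀ :=
        ⟨by linarith [hy.2], by linarith [hy.1]⟩
      exact (Set.piecewise_eq_of_mem _ _ _ hm).symm
    rw [h1, h2, h3]
  refine Integrable.mono'
    (integrable_const (((lam + d) * Mw + lam * Mw + lam * Mg) / c0)) ?_ ?_
  · refine hG.aestronglyMeasurable.congr ?_
    filter_upwards [ae_restrict_mem measurableSet_Ioc] with s hs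
    exact (heq s hs).symm
  · filter_upwards [ae_restrict_mem measurableSet_Ioc] with s hs
    have hsS : s ∈ Set.Ico x₀ (x₀ + h) := ⟨hs.1.le, lt_of_le_of_lt hs.2 hx2⟩
    have hds : c0 ≤ drift p r a s := hcle s hs.1.le
    have hdpos : 0 < drift p r a s := lt_of_lt_of_le hc0 hds
    have hmuone : ∀ t : Set ℝ, ((mu.restrict t) Set.univ).toReal ≤ 1 := by
      intro t
      rw [Measure.restrict_apply_univ]
      simpa using ENNReal.toReal_mono (by simp) (prob_le_one (μ := mu) (s := t))
    have bA : |∫ y in Set.Ioc (0 : ℝ) (s - x₀), w (s - y) ∂mu| ≤ Mw := by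
      have hb : ∀ᵐ y ∂mu.restrict (Set.Ioc (0 : ℝ) (s - x₀)), ‖w (s - y)‖ ≤ Mw := by
        filter_upwards [ae_restrict_mem measurableSet_Ioc] with y hy
        have hm : s - y ∈ Set.Ico x₀ (x₀ + h) :=
          ⟨by linarith [hy.2], by linarith [hy.1, hsS.2]⟩
        simpa [Real.norm_eq_abs] using hw_bdd _ hm
      calc |∫ y in Set.Ioc (0 : ℝ) (s - x₀), w (s - y) ∂mu|
          ≤ Mw * ((mu.restrict (Set.Ioc (0 : ℝ) (s - x₀))) Set.univ).toReal := by
            simpa [Real.norm_eq_abs, Measure.real] using norm_integral_le_of_norm_le_const hb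
        _ ≤ Mw * 1 := mul_le_mul_of_nonneg_left (hmuone _) hMw
        _ = Mw := mul_one Mw
    have bB : |∫ y in Set.Ioc (s - x₀) (s + p / a), g (s - y) ∂mu| ≤ Mg := by
      have hb : ∀ᵐ y ∂mu.restrict (Set.Ioc (s - x₀) (s + p / a)), ‖g (s - y)‖ ≤ Mg := by
        filter_upwards [ae_restrict_mem measurableSet_Ioc] with y hy
        have hm : s - y ∈ Set.Icc (-(p / a)) x₀ :=
          ⟨by linarith [hy.2], by linarith [hy.1]⟩
        simpa [Real.norm_eq_abs] using hg_bdd _ hm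
      calc |∫ y in Set.Ioc (s - x₀) (s + p / a), g (s - y) ∂mu|
          ≤ Mg * ((mu.restrict (Set.Ioc (s - x₀) (s + p / a))) Set.univ).toReal := by
            simpa [Real.norm_eq_abs, Measure.real] using norm_integral_le_of_norm_le_const hb
        _ ≤ Mg * 1 := mul_le_mul_of_nonneg_left (hmuone _) hMg
        _ = Mg := mul_one Mg
    have bW : |(lam + d) * w s| ≤ (lam + d) * Mw := by
      rw [abs_mul, abs_of_nonneg (by linarith : (0:ℝ) ≤ lam + d)]
      exact mul_le_mul_of_nonneg_left (hw_bdd s hsS) (by linarith)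
    have tri : |(lam + d) * w s - lam * (∫ y in Set.Ioc (0 : ℝ) (s - x₀), w (s - y) ∂mu)
        - lam * (∫ y in Set.Ioc (s - x₀) (s + p / a), g (s - y) ∂mu)|
        ≤ (lam + d) * Mw + lam * Mw + lam * Mg := by
      have t1 := abs_sub ((lam + d) * w s
          - lam * (∫ y in Set.Ioc (0 : ℝ) (s - x₀), w (s - y) ∂mu))
        (lam * (∫ y in Set.Ioc (s - x₀) (s + p / a), g (s - y) ∂mu))
      have t2 := abs_sub ((lam + d) * w s)
        (lam * (∫ y in Set.Ioc (0 : ℝ) (s - x₀), w (s - y) ∂mu))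
      have b2 : |lam * (∫ y in Set.Ioc (0 : ℝ) (s - x₀), w (s - y) ∂mu)| ≤ lam * Mw := by
        rw [abs_mul, abs_of_nonneg hlam]
        exact mul_le_mul_of_nonneg_left bA hlam
      have b3 : |lam * (∫ y in Set.Ioc (s - x₀) (s + p / a), g (s - y) ∂mu)| ≤ lam * Mg := by
        rw [abs_mul, abs_of_nonneg hlam]
        exact mul_le_mul_of_nonneg_left bB hlam
      linarith
    rw [Real.norm_eq_abs, abs_div, abs_of_pos hdpos]
    exact div_le_div₀ (by positivity) tri hc0 hds

theorem stmt5
    (p lam d r a : ℝ) (hp : 0 < p) (hlam : 0 < lam) (hd : 0 < d)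
    (hr : 0 < r) (hra : r < a) (hrd : r < d)
    (mu : Measure ℝ) [IsProbabilityMeasure mu] (hmu : mu (Set.Iic 0) = 0)
    (x₀ : ℝ) (hx₀ : -(p / a) < x₀)
    (g : ℝ → ℝ)
    (hg_cont : ContinuousOn g (Set.Icc (-(p / a)) x₀))
    (hg_mono : MonotoneOn g (Set.Icc (-(p / a)) x₀))
    (hg_nonneg : ∀ x ∈ Set.Icc (-(p / a)) x₀, 0 ≤ g x)
    (hg_pos : 0 < g x₀)
    (h : ℝ) (hh : h = (p + a * x₀ * (if x₀ < 0 then (1 : ℝ) else 0)) / (2 * (2 * lam + d)))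
    (w₁ w₂ : ℝ → ℝ)
    (hw₁_bdd : ∃ M : ℝ, ∀ x ∈ Set.Ico x₀ (x₀ + h), |w₁ x| ≤ M)
    (hw₂_bdd : ∃ M : ℝ, ∀ x ∈ Set.Ico x₀ (x₀ + h), |w₂ x| ≤ M)
    (hw₁_cont : ContinuousOn w₁ (Set.Ico x₀ (x₀ + h)))
    (hw₂_cont : ContinuousOn w₂ (Set.Ico x₀ (x₀ + h)))
    (hw₁_mono : MonotoneOn w₁ (Set.Ico x₀ (x₀ + h)))
    (hw₂_mono : MonotoneOn w₂ (Set.Ico x₀ (x₀ + h)))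
    (hw₁_pos : ∀ x ∈ Set.Ico x₀ (x₀ + h), 0 < w₁ x)
    (hw₂_pos : ∀ x ∈ Set.Ico x₀ (x₀ + h), 0 < w₂ x) :
    sSup ((fun x => |Tcontract p lam d r a x₀ mu g w₁ x - Tcontract p lam d r a x₀ mu g w₂ x|) ''
        Set.Ico x₀ (x₀ + h))
      ≤ (1 / 2) * sSup ((fun x => |w₁ x - w₂ x|) '' Set.Ico x₀ (x₀ + h)) := by
  classical
  have ha : 0 < a := hr.trans hra
  have h2ld : 0 < 2 * lam + d := by linarith
  have hnum : 0 < p + a * x₀ * (if x₀ < 0 then (1 : ℝ) else 0) := by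
    by_cases hx0 : x₀ < 0
    · rw [if_pos hx0]
      nlinarith [mul_lt_mul_of_pos_left hx₀ ha, mul_div_cancel₀ p ha.ne']
    · rw [if_neg hx0]; nlinarith
  have hh0 : 0 < h := by rw [hh]; positivity
  have hx0S : x₀ ∈ Set.Ico x₀ (x₀ + h) := ⟨le_refl _, by linarith⟩
  have hc0 : 0 < drift p r a x₀ := drift_pos p r a x₀ hp hr.le ha hx₀
  have hcle : ∀ s, x₀ ≤ s → drift p r a x₀ ≤ drift p r a s :=
    fun s hs => drift_mono p r a hr.le ha.le hra.le hs
  have hkey : (2 * lam + d) * h ≤ drift p r a x₀ / 2 := by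
    rw [hh]
    unfold drift
    by_cases hx0 : x₀ < 0
    · rw [if_neg (not_le.mpr hx0), if_pos hx0]
      have heq : (2 * lam + d) * ((p + a * x₀ * 1) / (2 * (2 * lam + d)))
          = (p + a * x₀) / 2 := by field_simp
      rw [heq]
    · rw [if_pos (not_lt.mp hx0), if_neg hx0]
      have heq : (2 * lam + d) * ((p + a * x₀ * 0) / (2 * (2 * lam + d))) = p / 2 := by
        field_simp
        ring
      rw [heq]
      nlinarith [mul_nonneg hr.le (not_lt.mp hx0)]
  obtain ⟨M₁, hM₁⟩ := hw₁_bdd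
  obtain ⟨M₂, hM₂⟩ := hw₂_bdd
  have hM₁0 : 0 ≤ M₁ := (abs_nonneg _).trans (hM₁ x₀ hx0S)
  have hM₂0 : 0 ≤ M₂ := (abs_nonneg _).trans (hM₂ x₀ hx0S)
  set M := sSup ((fun x => |w₁ x - w₂ x|) '' Set.Ico x₀ (x₀ + h)) with hMdef
  have hbdd : BddAbove ((fun x => |w₁ x - w₂ x|) '' Set.Ico x₀ (x₀ + h)) := by
    refine ⟨M₁ + M₂, ?_⟩
    rintro z ⟨t, ht, rfl⟩
    calc |w₁ t - w₂ t| ≤ |w₁ t| + |w₂ t| := abs_sub _ _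
      _ ≤ M₁ + M₂ := add_le_add (hM₁ t ht) (hM₂ t ht)
  have hMb : ∀ t ∈ Set.Ico x₀ (x₀ + h), |w₁ t - w₂ t| ≤ M :=
    fun t ht => le_csSup hbdd ⟨t, ht, rfl⟩
  have hM0 : 0 ≤ M := le_trans (abs_nonneg _) (hMb x₀ hx0S)
  have hx₀Icc : x₀ ∈ Set.Icc (-(p / a)) x₀ := ⟨hx₀.le, le_refl _⟩
  have hg_bdd : ∀ t ∈ Set.Icc (-(p / a)) x₀, |g t| ≤ g x₀ := fun t ht => by
    rw [abs_of_nonneg (hg_nonneg t ht)]; exact hg_mono ht hx₀Icc ht.2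
  -- piecewise versions
  set w₁' : ℝ → ℝ := (Set.Ico x₀ (x₀ + h)).piecewise w₁ (fun _ => 0) with hw₁'def
  set w₂' : ℝ → ℝ := (Set.Ico x₀ (x₀ + h)).piecewise w₂ (fun _ => 0) with hw₂'def
  have hw₁'m : Measurable w₁' :=
    ContinuousOn.measurable_piecewise hw₁_cont continuousOn_const measurableSet_Ico
  have hw₂'m : Measurable w₂' :=
    ContinuousOn.measurable_piecewise hw₂_cont continuousOn_const measurableSet_Ico
  have hbw₁' : ∀ t, |w₁' t| ≤ M₁ := by
    intro t
    by_cases htS : t ∈ Set.Ico x₀ (x₀ + h)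
    · rw [hw₁'def, Set.piecewise_eq_of_mem _ _ _ htS]; exact hM₁ t htS
    · rw [hw₁'def, Set.piecewise_eq_of_notMem _ _ _ htS]; simpa using hM₁0
  have hbw₂' : ∀ t, |w₂' t| ≤ M₂ := by
    intro t
    by_cases htS : t ∈ Set.Ico x₀ (x₀ + h)
    · rw [hw₂'def, Set.piecewise_eq_of_mem _ _ _ htS]; exact hM₂ t htS
    · rw [hw₂'def, Set.piecewise_eq_of_notMem _ _ _ htS]; simpa using hM₂0
  have hmuone : ∀ t : Set ℝ, ((mu.restrict t) Set.univ).toReal ≤ 1 := by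
    intro t
    rw [Measure.restrict_apply_univ]
    simpa using ENNReal.toReal_mono (by simp) (prob_le_one (μ := mu) (s := t))
  have key : ∀ x ∈ Set.Ico x₀ (x₀ + h),
      |Tcontract p lam d r a x₀ mu g w₁ x - Tcontract p lam d r a x₀ mu g w₂ x|
        ≤ 1 / 2 * M := by
    intro x hx
    obtain ⟨hx1, hx2⟩ := hx
    have int1 := integrand_intervalIntegrable p lam d r a x₀ h (drift p r a x₀) (g x₀) M₁ mu
      hlam.le hd.le hc0 hcle hra.le g w₁ hg_cont hg_pos.le hg_bdd hw₁_cont hM₁0 hM₁ x hx1 hx2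
    have int2 := integrand_intervalIntegrable p lam d r a x₀ h (drift p r a x₀) (g x₀) M₂ mu
      hlam.le hd.le hc0 hcle hra.le g w₂ hg_cont hg_pos.le hg_bdd hw₂_cont hM₂0 hM₂ x hx1 hx2
    have hTdiff : Tcontract p lam d r a x₀ mu g w₁ x - Tcontract p lam d r a x₀ mu g w₂ x
        = ∫ s in x₀..x,
          (((lam + d) * w₁ s - lam * (∫ y in Set.Ioc (0 : ℝ) (s - x₀), w₁ (s - y) ∂mu)
            - lam * (∫ y in Set.Ioc (s - x₀) (s + p / a), g (s - y) ∂mu)) / drift p r a s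
          - ((lam + d) * w₂ s - lam * (∫ y in Set.Ioc (0 : ℝ) (s - x₀), w₂ (s - y) ∂mu)
            - lam * (∫ y in Set.Ioc (s - x₀) (s + p / a), g (s - y) ∂mu)) / drift p r a s) := by
      simp only [Tcontract]
      rw [add_sub_add_left_eq_sub, ← intervalIntegral.integral_sub int1 int2]
    have hbound : ∀ s ∈ Set.uIoc x₀ x,
        ‖((lam + d) * w₁ s - lam * (∫ y in Set.Ioc (0 : ℝ) (s - x₀), w₁ (s - y) ∂mu)
            - lam * (∫ y in Set.Ioc (s - x₀) (s + p / a), g (s - y) ∂mu)) / drift p r a s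
          - ((lam + d) * w₂ s - lam * (∫ y in Set.Ioc (0 : ℝ) (s - x₀), w₂ (s - y) ∂mu)
            - lam * (∫ y in Set.Ioc (s - x₀) (s + p / a), g (s - y) ∂mu)) / drift p r a s‖
          ≤ ((lam + d) * M + lam * M) / drift p r a x₀ := by
      intro s hs
      rw [Set.uIoc_of_le hx1] at hs
      have hsS : s ∈ Set.Ico x₀ (x₀ + h) := ⟨hs.1.le, lt_of_le_of_lt hs.2 hx2⟩
      have hds : drift p r a x₀ ≤ drift p r a s := hcle s hs.1.le
      have hdpos : 0 < drift p r a s := lt_of_lt_of_le hc0 hds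
      have hmem : ∀ y ∈ Set.Ioc (0 : ℝ) (s - x₀), s - y ∈ Set.Ico x₀ (x₀ + h) :=
        fun y hy => ⟨by linarith [hy.2], by linarith [hy.1, hsS.2]⟩
      have e1 : (∫ y in Set.Ioc (0 : ℝ) (s - x₀), w₁ (s - y) ∂mu)
          = ∫ y in Set.Ioc (0 : ℝ) (s - x₀), w₁' (s - y) ∂mu :=
        setIntegral_congr_fun measurableSet_Ioc fun y hy =>
          (Set.piecewise_eq_of_mem _ _ _ (hmem y hy)).symm
      have e2 : (∫ y in Set.Ioc (0 : ℝ) (s - x₀), w₂ (s - y) ∂mu)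
          = ∫ y in Set.Ioc (0 : ℝ) (s - x₀), w₂' (s - y) ∂mu :=
        setIntegral_congr_fun measurableSet_Ioc fun y hy =>
          (Set.piecewise_eq_of_mem _ _ _ (hmem y hy)).symm
      have hint1 : MeasureTheory.IntegrableOn (fun y => w₁' (s - y))
          (Set.Ioc (0 : ℝ) (s - x₀)) mu := integrable_comp_bdd mu w₁' hw₁'m M₁ hbw₁' s 0 (s - x₀)
      have hint2 : MeasureTheory.IntegrableOn (fun y => w₂' (s - y))
          (Set.Ioc (0 : ℝ) (s - x₀)) mu := integrable_comp_bdd mu w₂' hw₂'m M₂ hbw₂' s 0 (s - x₀)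
      have e3 : (∫ y in Set.Ioc (0 : ℝ) (s - x₀), w₁' (s - y) ∂mu)
          - (∫ y in Set.Ioc (0 : ℝ) (s - x₀), w₂' (s - y) ∂mu)
          = ∫ y in Set.Ioc (0 : ℝ) (s - x₀), (w₁' (s - y) - w₂' (s - y)) ∂mu :=
        (integral_sub hint1 hint2).symm
      have e4 : |∫ y in Set.Ioc (0 : ℝ) (s - x₀), (w₁' (s - y) - w₂' (s - y)) ∂mu| ≤ M := by
        have hb : ∀ᵐ y ∂mu.restrict (Set.Ioc (0 : ℝ) (s - x₀)),
            ‖w₁' (s - y) - w₂' (s - y)‖ ≤ M := by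
          filter_upwards [ae_restrict_mem measurableSet_Ioc] with y hy
          have hm := hmem y hy
          rw [hw₁'def, hw₂'def, Set.piecewise_eq_of_mem _ _ _ hm,
            Set.piecewise_eq_of_mem _ _ _ hm, Real.norm_eq_abs]
          exact hMb _ hm
        calc |∫ y in Set.Ioc (0 : ℝ) (s - x₀), (w₁' (s - y) - w₂' (s - y)) ∂mu|
            ≤ M * ((mu.restrict (Set.Ioc (0 : ℝ) (s - x₀))) Set.univ).toReal := by
              simpa [Real.norm_eq_abs, Measure.real] using norm_integral_le_of_norm_le_const hb
          _ ≤ M * 1 := mul_le_mul_of_nonneg_left (hmuone _) hM0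
          _ = M := mul_one M
      have hsub : ((lam + d) * w₁ s - lam * (∫ y in Set.Ioc (0 : ℝ) (s - x₀), w₁ (s - y) ∂mu)
            - lam * (∫ y in Set.Ioc (s - x₀) (s + p / a), g (s - y) ∂mu)) / drift p r a s
          - ((lam + d) * w₂ s - lam * (∫ y in Set.Ioc (0 : ℝ) (s - x₀), w₂ (s - y) ∂mu)
            - lam * (∫ y in Set.Ioc (s - x₀) (s + p / a), g (s - y) ∂mu)) / drift p r a s
          = ((lam + d) * (w₁ s - w₂ s)
            - lam * (∫ y in Set.Ioc (0 : ℝ) (s - x₀), (w₁' (s - y) - w₂' (s - y)) ∂mu))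
            / drift p r a s := by
        rw [div_sub_div_same, e1, e2, ← e3]
        congr 1
        ring
      rw [hsub, Real.norm_eq_abs, abs_div, abs_of_pos hdpos]
      have tri : |(lam + d) * (w₁ s - w₂ s)
          - lam * (∫ y in Set.Ioc (0 : ℝ) (s - x₀), (w₁' (s - y) - w₂' (s - y)) ∂mu)|
          ≤ (lam + d) * M + lam * M := by
        have t1 := abs_sub ((lam + d) * (w₁ s - w₂ s))
          (lam * (∫ y in Set.Ioc (0 : ℝ) (s - x₀), (w₁' (s - y) - w₂' (s - y)) ∂mu))
        have b1 : |(lam + d) * (w₁ s - w₂ s)| ≤ (lam + d) * M := by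
          rw [abs_mul, abs_of_nonneg (by linarith : (0:ℝ) ≤ lam + d)]
          exact mul_le_mul_of_nonneg_left (hMb s hsS) (by linarith)
        have b2 : |lam * (∫ y in Set.Ioc (0 : ℝ) (s - x₀),
            (w₁' (s - y) - w₂' (s - y)) ∂mu)| ≤ lam * M := by
          rw [abs_mul, abs_of_nonneg hlam.le]
          exact mul_le_mul_of_nonneg_left e4 hlam.le
        linarith
      exact div_le_div₀ (by positivity) tri hc0 hds
    have hnorm := intervalIntegral.norm_integral_le_of_norm_le_const hbound
    rw [hTdiff]
    have hxx : |x - x₀| ≤ h := by rw [abs_of_nonneg (by linarith)]; linarith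
    calc |∫ s in x₀..x, _| ≤ ((lam + d) * M + lam * M) / drift p r a x₀ * |x - x₀| := by
          simpa [Real.norm_eq_abs] using hnorm
      _ ≤ 1 / 2 * M := by
          rw [div_mul_eq_mul_div, div_le_iff₀ hc0]
          nlinarith [mul_le_mul_of_nonneg_left hkey hM0,
            mul_le_mul_of_nonneg_left hxx (mul_nonneg (by linarith : (0:ℝ) ≤ 2 * lam + d) hM0)]
  refine csSup_le (Set.Nonempty.image _ ⟨x₀, hx0S⟩) ?_
  rintro z ⟨x, hx, rfl⟩
  exact key x hx
end
end

section
/- Assume α > λ+δ and let −p/α < x₁ < x₂ < 0. Suppose V : [−p/α, x₂) → [0,∞) is continuous, nondecreasing, differentiable at every point of [x₁, x₂), satisfies V′(x₁) = 1, and satisfies (p + α·x)·V′(x) = (λ+δ)·V(x) − λ·I_V(x) for all x ∈ [x₁, x₂). Then there exists ε₀ ∈ (0, x₂−x₁) such that V′(x₁+ε) < 1 for all ε ∈ (0, ε₀). -/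
open MeasureTheory Set Filter

noncomputable section

theorem stmt8
    (p lam d r a : ℝ) (hp : 0 < p) (hlam : 0 < lam) (hd : 0 < d)
    (hr : 0 < r) (hra : r < a) (hrd : r < d)
    (mu : Measure ℝ) [IsProbabilityMeasure mu] (hmu : mu (Set.Iic 0) = 0)
    (hald : lam + d < a)
    (x₁ x₂ : ℝ) (h1 : -(p / a) < x₁) (h12 : x₁ < x₂) (h2 : x₂ < 0)
    (V : ℝ → ℝ)
    (hV_cont : ContinuousOn V (Set.Ico (-(p / a)) x₂))
    (hV_nonneg : ∀ x ∈ Set.Ico (-(p / a)) x₂, 0 ≤ V x)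
    (hV_mono : MonotoneOn V (Set.Ico (-(p / a)) x₂))
    (hV_diff : ∀ x ∈ Set.Ico x₁ x₂, DifferentiableAt ℝ V x)
    (hV1 : deriv V x₁ = 1)
    (heq : ∀ x ∈ Set.Ico x₁ x₂,
      (p + a * x) * deriv V x = (lam + d) * V x - lam * Iop p a mu V x) :
    ∃ ε₀ : ℝ, 0 < ε₀ ∧ ε₀ < x₂ - x₁ ∧
      ∀ ε : ℝ, 0 < ε → ε < ε₀ → deriv V (x₁ + ε) < 1 := by
  have ha : 0 < a := hr.trans hra
  have hpa : 0 < p / a := div_pos hp ha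
  have hld : 0 < lam + d := by linarith
  have hK1 : (1:ℝ) < a / (lam + d) := (one_lt_div hld).mpr hald
  have hx₁mem : x₁ ∈ Set.Ico (-(p/a)) x₂ := ⟨le_of_lt h1, h12⟩
  -- integrability of the integrand of Iop
  have hInt : ∀ x, -(p/a) ≤ x → x < x₂ →
      IntegrableOn (fun u => V (x - u)) (Set.Ioc 0 (x + p/a)) mu := by
    intro x hxx1 hxx2
    have hmaps : Set.MapsTo (fun u => x - u) (Set.Ioc 0 (x + p/a))
        (Set.Ico (-(p/a)) x₂) := by
      intro u hu
      show x - u ∈ Set.Ico (-(p/a)) x₂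
      exact ⟨by linarith [hu.2], by linarith [hu.1]⟩
    have hcont : ContinuousOn (fun u => V (x - u)) (Set.Ioc 0 (x + p/a)) :=
      hV_cont.comp (by fun_prop) hmaps
    have hmeas : AEStronglyMeasurable (fun u => V (x - u)) (mu.restrict (Set.Ioc 0 (x + p/a))) :=
      hcont.aestronglyMeasurable measurableSet_Ioc
    refine Integrable.mono' (integrable_const (V x)) hmeas ?_
    rw [ae_restrict_iff' measurableSet_Ioc]
    filter_upwards with u hu
    have hmem : x - u ∈ Set.Ico (-(p/a)) x₂ := hmaps hu
    rw [Real.norm_eq_abs, abs_of_nonneg (hV_nonneg _ hmem)]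
    exact hV_mono hmem ⟨hxx1, hxx2⟩ (by linarith [hu.1])
  -- monotonicity of Iop
  have hIop : ∀ x, x₁ < x → x < x₂ → Iop p a mu V x₁ ≤ Iop p a mu V x := by
    intro x hxl hxr
    have hxge : -(p/a) ≤ x := le_of_lt (h1.trans hxl)
    have h1' := hInt x₁ hx₁mem.1 h12
    have h2' : IntegrableOn (fun u => V (x - u)) (Set.Ioc 0 (x₁ + p/a)) mu :=
      (hInt x hxge hxr).mono_set (Set.Ioc_subset_Ioc_right (by linarith))
    have step1 : ∫ u in Set.Ioc (0:ℝ) (x₁ + p/a), V (x₁ - u) ∂mu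
        ≤ ∫ u in Set.Ioc (0:ℝ) (x₁ + p/a), V (x - u) ∂mu := by
      refine setIntegral_mono_on h1' h2' measurableSet_Ioc ?_
      intro u hu
      have hmemx₁ : x₁ - u ∈ Set.Ico (-(p/a)) x₂ :=
        ⟨by linarith [hu.2], by linarith [hu.1]⟩
      have hmemx : x - u ∈ Set.Ico (-(p/a)) x₂ :=
        ⟨by linarith [hu.2], by linarith [hu.1]⟩
      exact hV_mono hmemx₁ hmemx (by linarith)
    have step2 : ∫ u in Set.Ioc (0:ℝ) (x₁ + p/a), V (x - u) ∂mu
        ≤ ∫ u in Set.Ioc (0:ℝ) (x + p/a), V (x - u) ∂mu := by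
      refine setIntegral_mono_set (hInt x hxge hxr) ?_
        (HasSubset.Subset.eventuallyLE (Set.Ioc_subset_Ioc_right (by linarith)))
      rw [Filter.EventuallyLE, ae_restrict_iff' measurableSet_Ioc]
      filter_upwards with u hu
      exact hV_nonneg _ ⟨by linarith [hu.2], by linarith [hu.1]⟩
    simpa [Iop] using step1.trans step2
  -- the slope near x₁ is eventually < a/(lam+d)
  have hder : HasDerivAt V 1 x₁ := by
    have := (hV_diff x₁ ⟨le_refl x₁, h12⟩).hasDerivAt
    rwa [hV1] at this
  have hslope : Filter.Tendsto (slope V x₁) (nhdsWithin x₁ {x₁}ᶜ) (nhds 1) :=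
    hasDerivAt_iff_tendsto_slope.mp hder
  have hev : ∀ᶠ y in nhdsWithin x₁ {x₁}ᶜ, slope V x₁ y < a / (lam + d) :=
    hslope.eventually_lt_const hK1
  rw [Filter.Eventually, Metric.mem_nhdsWithin_iff] at hev
  obtain ⟨ε₁, hε₁, hsub⟩ := hev
  have hmin : 0 < min ε₁ (x₂ - x₁) := lt_min hε₁ (by linarith)
  refine ⟨min ε₁ (x₂ - x₁) / 2, by linarith, ?_, ?_⟩
  · have := min_le_right ε₁ (x₂ - x₁); linarith
  intro ε hε hεlt
  have hεε₁ : ε < ε₁ := by have := min_le_left ε₁ (x₂ - x₁); linarith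
  set x := x₁ + ε with hxdef
  have hxlt : x < x₂ := by
    have := min_le_right ε₁ (x₂ - x₁); rw [hxdef]; linarith
  have hxmem : x ∈ Set.Ico x₁ x₂ := ⟨by rw [hxdef]; linarith, hxlt⟩
  have hslopex : slope V x₁ x < a / (lam + d) := by
    apply hsub
    refine ⟨?_, ?_⟩
    · rw [Metric.mem_ball, Real.dist_eq, hxdef]
      rw [show x₁ + ε - x₁ = ε by ring, abs_of_pos hε]; exact hεε₁
    · simp only [Set.mem_compl_iff, Set.mem_singleton_iff, hxdef]
      intro hcon; linarith [hcon]
  have hslope_eq : slope V x₁ x = (V x - V x₁) / ε := by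
    rw [slope_def_field, hxdef, show x₁ + ε - x₁ = ε by ring]
  have hVd2 : (V x - V x₁) * (lam + d) < a * ε := by
    rw [hslope_eq] at hslopex
    exact (div_lt_div_iff₀ hε hld).mp hslopex
  have heq₁ := heq x₁ ⟨le_refl x₁, h12⟩
  rw [hV1, mul_one] at heq₁
  have heqx := heq x hxmem
  have hIopm := hIop x (by rw [hxdef]; linarith) hxlt
  have hIopm' : lam * Iop p a mu V x₁ ≤ lam * Iop p a mu V x :=
    mul_le_mul_of_nonneg_left hIopm (le_of_lt hlam)
  have hax : a * x = a * x₁ + a * ε := by rw [hxdef]; ring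
  have hpax : 0 < p + a * x := by
    have h3 : a * (p / a) = p := mul_div_cancel₀ p (ne_of_gt ha)
    have h4 : 0 < a * (x + p / a) :=
      mul_pos ha (by rw [hxdef]; linarith)
    rw [mul_add, h3] at h4; linarith
  have hmain : (p + a * x) * deriv V x < (p + a * x) * 1 := by
    rw [heqx, mul_one]
    have hVd2e : lam * V x + d * V x - lam * V x₁ - d * V x₁ < a * ε := by
      have hre : (V x - V x₁) * (lam + d)
          = lam * V x + d * V x - lam * V x₁ - d * V x₁ := by ring
      linarith only [hVd2, hre]
    linarith only [heq₁, hVd2e, hIopm', hax]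
  exact lt_of_mul_lt_mul_left hmain hpax.le
end
end
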